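/- In a generalized model category M with a left Bousfield localization LM: a map between objects that are fibrant in LM is a weak equivalence (respectively a fibration) in LM if and only if it is a weak equivalence (respectively a fibration) in M. -/

import Mathlib

open CategoryTheory CategoryTheory.Limits CategoryTheory.Functor

universe w₁ w₂ w₃ w₄ v₁ v₂ v₃ v₄

namespace PaperStacks

/-- A functor `p : A ⥤ B` is an isofibration if every isomorphism `f : p.obj a ≅ b` in `B`
lifts to an isomorphism `e : a ≅ a'` in `A` with `p.obj a' = b` and `p.map e.hom = f.hom`
(up to the identification `p.obj a' = b`). -/
def IsIsofibration {A : Type w₁} {B : Type w₂} [Category.{v₁} A] [Category.{v₂} B]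
    (p : A ⥤ B) : Prop :=
  ∀ (a : A) (b : B) (f : p.obj a ≅ b), ∃ (a' : A) (e : a ≅ a') (h : p.obj a' = b),
    p.map e.hom = f.hom ≫ eqToHom h.symm

/-- A surjective equivalence: an equivalence of categories that is surjective on objects. -/
def IsSurjectiveEquivalence {A : Type w₁} {B : Type w₂} [Category.{v₁} A] [Category.{v₂} B]
    (p : A ⥤ B) : Prop :=
  p.IsEquivalence ∧ Function.Surjective p.obj

variable {M : Type w₁} [Category.{v₁} M]

/-- `(L, R)` is a weak factorization system. -/
structure IsWFS (L R : MorphismProperty M) : Prop where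
  llp : ∀ ⦃X Y : M⦄ (f : X ⟶ Y),
    L f ↔ ∀ ⦃Z T : M⦄ (g : Z ⟶ T), R g → HasLiftingProperty f g
  rlp : ∀ ⦃X Y : M⦄ (g : X ⟶ Y),
    R g ↔ ∀ ⦃Z T : M⦄ (f : Z ⟶ T), L f → HasLiftingProperty f g
  fact : ∀ ⦃X Y : M⦄ (f : X ⟶ Y),
    ∃ (Z : M) (i : X ⟶ Z) (p : Z ⟶ Y), L i ∧ R p ∧ i ≫ p = f

/-- `(W, C, F)` is a generalized model category structure on `M`. -/
structure IsGMC (W C F : MorphismProperty M) : Prop where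
  hasInitial : HasInitial M
  hasTerminal : HasTerminal M
  pushoutCof : ∀ ⦃X Y Z : M⦄ (f : X ⟶ Y) (g : X ⟶ Z), C f → HasPushout f g
  pullbackFib : ∀ ⦃X Y Z : M⦄ (f : X ⟶ Y) (g : Z ⟶ Y), F f → HasPullback g f
  twoOutOfThree : W.HasTwoOutOfThreeProperty
  wfs₁ : IsWFS C (F ⊓ W)
  wfs₂ : IsWFS (C ⊓ W) F

/-- An object is fibrant if its map to the terminal object is a fibration. -/
def Fibrant (F : MorphismProperty M) (X : M) : Prop :=
  ∃ (T : M) (h : IsTerminal T), F (h.from X)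

/-- An object is cofibrant if the map to it from the initial object is a cofibration. -/
def Cofibrant (C : MorphismProperty M) (A : M) : Prop :=
  ∃ (I : M) (h : IsInitial I), C (h.to A)

section Helpers

variable {W C F : MorphismProperty M}

/-- Identities belong to the left class of any WFS. -/
lemma IsWFS.id_mem_left {L R : MorphismProperty M} (h : IsWFS L R) (X : M) : L (𝟙 X) :=
  (h.llp (𝟙 X)).2 (fun _ _ _ _ => inferInstance)

/-- The right class of a WFS is closed under composition. -/
lemma IsWFS.right_comp {L R : MorphismProperty M} (h : IsWFS L R) {X Y Z : M}
    (p : X ⟶ Y) (q : Y ⟶ Z) (hp : R p) (hq : R q) : R (p ≫ q) :=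
  (h.rlp (p ≫ q)).2 (fun _ _ f hf => by
    haveI := (h.rlp p).1 hp f hf
    haveI := (h.rlp q).1 hq f hf
    infer_instance)

/-- The left class of a WFS is closed under composition. -/
lemma IsWFS.left_comp {L R : MorphismProperty M} (h : IsWFS L R) {X Y Z : M}
    (i : X ⟶ Y) (j : Y ⟶ Z) (hi : L i) (hj : L j) : L (i ≫ j) :=
  (h.llp (i ≫ j)).2 (fun _ _ g hg => by
    haveI := (h.llp i).1 hi g hg
    haveI := (h.llp j).1 hj g hg
    infer_instance)

/-- If the codomain of a map in the "fibration" class of a WFS-style characterization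
is fibrant, so is the domain. -/
lemma fibrant_of_map {F' : MorphismProperty M} {L : MorphismProperty M}
    (h : IsWFS L F') {Z Y : M} (p : Z ⟶ Y) (hp : F' p) (hY : Fibrant F' Y) :
    Fibrant F' Z := by
  obtain ⟨T, hT, hf⟩ := hY
  refine ⟨T, hT, ?_⟩
  have : hT.from Z = p ≫ hT.from Y := hT.hom_ext _ _
  rw [this]
  exact h.right_comp _ _ hp hf

/-- Both legs of the fold pushout of `j` along itself inherit the lifting property of `j`. -/
lemma pushout_lifting {X E Z T : M} (j : X ⟶ E) [HasPushout j j] (g : Z ⟶ T)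
    (h : HasLiftingProperty j g) :
    HasLiftingProperty (pushout.inl j j) g ∧ HasLiftingProperty (pushout.inr j j) g := by
  constructor
  · constructor
    intro u v sq
    have w2 : (j ≫ u) ≫ g = j ≫ (pushout.inr j j ≫ v) := by
      rw [Category.assoc, sq.w, ← Category.assoc, ← Category.assoc, pushout.condition]
    obtain ⟨⟨ℓ⟩⟩ := h.sq_hasLift (CommSq.mk w2)
    refine ⟨⟨⟨pushout.desc u ℓ.l ℓ.fac_left.symm, ?_, ?_⟩⟩⟩
    · simp [pushout.inl_desc]
    · apply pushout.hom_ext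
      · rw [← Category.assoc, pushout.inl_desc, sq.w]
      · rw [← Category.assoc, pushout.inr_desc, ℓ.fac_right]
  · constructor
    intro u v sq
    have w2 : (j ≫ u) ≫ g = j ≫ (pushout.inl j j ≫ v) := by
      rw [Category.assoc, sq.w, ← Category.assoc, ← Category.assoc, pushout.condition]
    obtain ⟨⟨ℓ⟩⟩ := h.sq_hasLift (CommSq.mk w2)
    refine ⟨⟨⟨pushout.desc ℓ.l u ℓ.fac_left, ?_, ?_⟩⟩⟩
    · simp [pushout.inr_desc]
    · apply pushout.hom_ext
      · rw [← Category.assoc, pushout.inl_desc, ℓ.fac_right]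
      · rw [← Category.assoc, pushout.inr_desc, sq.w]

/-- Key lemma: a cofibration which is a weak equivalence of `LM`, between `LM`-fibrant
objects, is a weak equivalence of `M`. -/
lemma key_lemma {W C F : MorphismProperty M} (hM : IsGMC W C F)
    {W' F' : MorphismProperty M} (hLM : IsGMC W' C F') (hWW' : W ≤ W')
    {X E : M} (j : X ⟶ E) (hjC : C j) (hjW' : W' j)
    (hX : Fibrant F' X) (hE : Fibrant F' E) : W j := by
  obtain ⟨TX, hTX, hfX⟩ := hX
  obtain ⟨TE, hTE, hfE⟩ := hE
  -- retraction r of j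
  have hj' : (C ⊓ W') j := ⟨hjC, hjW'⟩
  have hliftr : HasLiftingProperty j (hTX.from X) := (hLM.wfs₂.rlp _).1 hfX j hj'
  obtain ⟨⟨rl⟩⟩ := hliftr.sq_hasLift
    (CommSq.mk (show (𝟙 X) ≫ hTX.from X = j ≫ hTX.from E from hTX.hom_ext _ _))
  set r : E ⟶ X := rl.l with hr
  have hjr : j ≫ r = 𝟙 X := rl.fac_left
  -- cylinder on E via the fold pushout of j with itself
  haveI : HasPushout j j := hM.pushoutCof j j hjC
  let inl := pushout.inl j j
  let inr := pushout.inr j j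
  have hinlC' : (C ⊓ W') inl := (hLM.wfs₂.llp inl).2
    (fun Z T g hg => (pushout_lifting j g ((hLM.wfs₂.llp j).1 hj' g hg)).1)
  have hinlC : C inl := (hM.wfs₁.llp inl).2
    (fun Z T g hg => (pushout_lifting j g ((hM.wfs₁.llp j).1 hjC g hg)).1)
  have hinrC : C inr := (hM.wfs₁.llp inr).2
    (fun Z T g hg => (pushout_lifting j g ((hM.wfs₁.llp j).1 hjC g hg)).2)
  let nabla : pushout j j ⟶ E := pushout.desc (𝟙 E) (𝟙 E) rfl
  obtain ⟨Cyl, w, q, hwC, hqFW, hwq⟩ := hM.wfs₁.fact nabla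
  -- identities are weak equivalences
  have hidW : ∀ (Z : M), W (𝟙 Z) := fun Z => (hM.wfs₂.id_mem_left Z).2
  have hidW' : ∀ (Z : M), W' (𝟙 Z) := fun Z => (hLM.wfs₂.id_mem_left Z).2
  -- w is in W'
  have hnablaW' : W' nabla := by
    have : W' (inl ≫ nabla) := by
      have : inl ≫ nabla = 𝟙 E := by simp [inl, nabla, pushout.inl_desc]
      rw [this]; exact hidW' E
    exact hLM.twoOutOfThree.toHasOfPrecompProperty.of_precomp inl nabla hinlC'.2 this
  have hwW' : W' w := by
    have := hnablaW'
    rw [← hwq] at this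
    exact hLM.twoOutOfThree.toHasOfPostcompProperty.of_postcomp w q (hWW' _ hqFW.2) this
  -- endpoints of the cylinder
  let i₀ : E ⟶ Cyl := inl ≫ w
  let i₁ : E ⟶ Cyl := inr ≫ w
  have hi₀q : i₀ ≫ q = 𝟙 E := by simp [i₀, Category.assoc, hwq, inl, nabla, pushout.inl_desc]
  have hi₁q : i₁ ≫ q = 𝟙 E := by simp [i₁, Category.assoc, hwq, inr, nabla, pushout.inr_desc]
  have hi₀W : W i₀ := by
    refine hM.twoOutOfThree.toHasOfPostcompProperty.of_postcomp i₀ q hqFW.2 ?_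
    rw [hi₀q]; exact hidW E
  have hi₀C : C i₀ := hM.wfs₁.left_comp inl w hinlC hwC
  -- the homotopy H : Cyl ⟶ E from r ≫ j to the identity
  let φ : pushout j j ⟶ E := pushout.desc (r ≫ j) (𝟙 E)
    (by rw [← Category.assoc, hjr, Category.id_comp, Category.comp_id])
  have hliftH : HasLiftingProperty w (hTE.from E) := (hLM.wfs₂.rlp _).1 hfE w ⟨hwC, hwW'⟩
  obtain ⟨⟨Hl⟩⟩ := hliftH.sq_hasLift
    (CommSq.mk (show φ ≫ hTE.from E = w ≫ hTE.from Cyl from hTE.hom_ext _ _))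
  set H : Cyl ⟶ E := Hl.l with hH
  have hwH : w ≫ H = φ := Hl.fac_left
  have hi₀H : i₀ ≫ H = r ≫ j := by
    rw [show i₀ ≫ H = inl ≫ (w ≫ H) from (Category.assoc _ _ _), hwH]
    simp [inl, φ, pushout.inl_desc]
  have hi₁H : i₁ ≫ H = 𝟙 E := by
    rw [show i₁ ≫ H = inr ≫ (w ≫ H) from (Category.assoc _ _ _), hwH]
    simp [inr, φ, pushout.inr_desc]
  -- j has the left lifting property against all fibrations of M
  have hjCW : (C ⊓ W) j := by
    refine (hM.wfs₂.llp j).2 (fun Z T g hg => ?_)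
    constructor
    intro a b sq
    haveI hlift₀ : HasLiftingProperty i₀ g := (hM.wfs₂.llp i₀).1 ⟨hi₀C, hi₀W⟩ g hg
    have w2 : (r ≫ a) ≫ g = i₀ ≫ (H ≫ b) := by
      rw [Category.assoc, sq.w, ← Category.assoc, ← Category.assoc, hi₀H]
    obtain ⟨⟨G⟩⟩ := hlift₀.sq_hasLift (CommSq.mk w2)
    have hji : j ≫ i₀ = j ≫ i₁ := by
      rw [show j ≫ i₀ = (j ≫ inl) ≫ w by simp [i₀],
        show j ≫ i₁ = (j ≫ inr) ≫ w by simp [i₁], pushout.condition]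
    refine ⟨⟨⟨i₁ ≫ G.l, ?_, ?_⟩⟩⟩
    · rw [← Category.assoc, ← hji, Category.assoc, G.fac_left, ← Category.assoc, hjr,
        Category.id_comp]
    · rw [Category.assoc, G.fac_right, ← Category.assoc, hi₁H, Category.id_comp]
  exact hjCW.2

end Helpers

/-- In a left Bousfield localization `LM` of a generalized model category
`M`, a map between `LM`-fibrant objects is a weak equivalence (resp. fibration) in `LM`
if and only if it is one in `M`. -/
theorem localization_weakEquivalence_and_fibration_between_local_fibrant
    {W C F : MorphismProperty M} (hM : IsGMC W C F)
    {W' F' : MorphismProperty M} (hLM : IsGMC W' C F') (hWW' : W ≤ W')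
    {X Y : M} (f : X ⟶ Y) (hX : Fibrant F' X) (hY : Fibrant F' Y) :
    (W' f ↔ W f) ∧ (F' f ↔ F f) := by
  have hidW : ∀ (Z : M), W (𝟙 Z) := fun Z => (hM.wfs₂.id_mem_left Z).2
  constructor
  · constructor
    · intro hf
      obtain ⟨Z, i, p, hi, hpF', hip⟩ := hLM.wfs₂.fact f
      have hZ : Fibrant F' Z := fibrant_of_map hLM.wfs₂ p hpF' hY
      have hiW : W i := key_lemma hM hLM hWW' i hi.1 hi.2 hX hZ
      have hpW' : W' p := hLM.twoOutOfThree.toHasOfPrecompProperty.of_precomp i p hi.2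
        (by rw [hip]; exact hf)
      have hpFW : (F ⊓ W) p := (hM.wfs₁.rlp p).2
        (fun A B c hc => (hLM.wfs₁.rlp p).1 ⟨hpF', hpW'⟩ c hc)
      rw [← hip]
      exact hM.twoOutOfThree.toIsStableUnderComposition.comp_mem i p hiW hpFW.2
    · exact fun h => hWW' _ h
  · constructor
    · intro hf
      refine (hM.wfs₂.rlp f).2 (fun A B c hc => ?_)
      exact (hLM.wfs₂.rlp f).1 hf c ⟨hc.1, hWW' _ hc.2⟩
    · intro hfF
      obtain ⟨E, j, q, hj, hqF', hjq⟩ := hLM.wfs₂.fact f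
      have hE : Fibrant F' E := fibrant_of_map hLM.wfs₂ q hqF' hY
      have hjW : W j := key_lemma hM hLM hWW' j hj.1 hj.2 hX hE
      have hlift : HasLiftingProperty j f := (hM.wfs₂.llp j).1 ⟨hj.1, hjW⟩ f hfF
      obtain ⟨⟨t⟩⟩ := hlift.sq_hasLift
        (CommSq.mk (show (𝟙 X) ≫ f = j ≫ q by rw [Category.id_comp, hjq]))
      refine (hLM.wfs₂.rlp f).2 (fun A B c hc => ?_)
      constructor
      intro u v sq
      have hlq : HasLiftingProperty c q := (hLM.wfs₂.rlp q).1 hqF' c hc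
      have w2 : (u ≫ j) ≫ q = c ≫ v := by rw [Category.assoc, hjq, sq.w]
      obtain ⟨⟨L⟩⟩ := hlq.sq_hasLift (CommSq.mk w2)
      refine ⟨⟨⟨L.l ≫ t.l, ?_, ?_⟩⟩⟩
      · rw [← Category.assoc, L.fac_left, Category.assoc, t.fac_left, Category.comp_id]
      · rw [Category.assoc, t.fac_right, L.fac_right]


end PaperStacks
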